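/- arXiv:1809.00356 — 7 statements merged into one kernel-verified Lean document; each statement's English description precedes it below -/
import Mathlib

section
/- Every locally solvable periodic group is locally finite. -/
lemma map_derivedSeries_commutator_le {G : Type*} [Group G] (n : ℕ) :
    (derivedSeries ↥(commutator G) n).map (commutator G).subtype ≤ derivedSeries G (n + 1) := by
  induction n with
  | zero =>
      rw [derivedSeries_zero, ← MonoidHom.range_eq_map, Subgroup.range_subtype,
        derivedSeries_one]
  | succ n ih =>
      rw [derivedSeries_succ, Subgroup.map_commutator, derivedSeries_succ]
      exact Subgroup.commutator_mono ih ih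

lemma finite_of_fg_torsion_solvable :
    ∀ (n : ℕ) {G : Type*} [Group G], Group.FG G → Monoid.IsTorsion G →
      derivedSeries G n = ⊥ → Finite G := by
  intro n
  induction n with
  | zero =>
      intro G _ _ _ h
      rw [derivedSeries_zero] at h
      have : Subsingleton G := by
        constructor
        intro a b
        have ha : a ∈ (⊥ : Subgroup G) := h ▸ Subgroup.mem_top a
        have hb : b ∈ (⊥ : Subgroup G) := h ▸ Subgroup.mem_top b
        rw [Subgroup.mem_bot] at ha hb
        rw [ha, hb]
      exact Finite.of_subsingleton
  | succ n ih =>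
      intro G _ hfg ht h
      haveI : Group.FG G := hfg
      -- The abelianization is a f.g. torsion abelian group, hence finite
      have htab : Monoid.IsTorsion (Abelianization G) :=
        IsTorsion.of_surjective (f := Abelianization.of) (fun x =>
          QuotientGroup.induction_on x fun g => ⟨g, rfl⟩) ht
      haveI : Group.FG (Abelianization G) :=
        Group.fg_of_surjective (f := Abelianization.of)
          (fun x => QuotientGroup.induction_on x fun g => ⟨g, rfl⟩)
      haveI hfinab : Finite (Abelianization G) := CommGroup.finite_of_fg_torsion _ htab
      haveI : Finite (G ⧸ commutator G) := hfinab
      haveI : (commutator G).FiniteIndex := Subgroup.finiteIndex_of_finite_quotient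
      haveI : Group.FG ↥(commutator G) := Subgroup.fg_of_index_ne_zero _
      have hts : Monoid.IsTorsion ↥(commutator G) := IsTorsion.subgroup ht _
      have hds : derivedSeries ↥(commutator G) n = ⊥ := by
        have hle := map_derivedSeries_commutator_le (G := G) n
        rw [h, le_bot_iff, Subgroup.map_eq_bot_iff_of_injective _
          (Subgroup.subtype_injective _)] at hle
        exact hle
      haveI : Finite ↥(commutator G) := ih ‹_› hts hds
      exact Finite.of_equiv _ (Subgroup.groupEquivQuotientProdSubgroup (s := commutator G)).symm

/-- Every locally solvable periodic group is locally finite. -/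
theorem locallySolvable_periodic_isLocallyFinite {G : Type*} [Group G]
    (hsol : ∀ S : Set G, S.Finite → IsSolvable ↥(Subgroup.closure S))
    (htor : ∀ g : G, IsOfFinOrder g) :
    ∀ S : Set G, S.Finite → Finite ↥(Subgroup.closure S) := by
  intro S hS
  haveI := hS.to_subtype
  haveI : Group.FG ↥(Subgroup.closure S) := Group.closure_finite_fg S
  have ht : Monoid.IsTorsion ↥(Subgroup.closure S) :=
    IsTorsion.subgroup (fun g => htor g) _
  obtain ⟨n, hn⟩ := (hsol S hS).solvable
  exact finite_of_fg_torsion_solvable n ‹_› ht hn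
end

section
/- Let G be a finitely generated solvable periodic group. Then G is finite. -/
private lemma aux_map_derived {G : Type*} [Group G] (n : ℕ) :
    ((derivedSeries (↥(commutator G)) n).map (commutator G).subtype)
      ≤ derivedSeries G (n + 1) := by
  induction n with
  | zero =>
    rw [derivedSeries_zero, ← MonoidHom.range_eq_map, Subgroup.range_subtype, derivedSeries_one]
  | succ n ih =>
    rw [show derivedSeries G (n + 1 + 1)
          = ⁅derivedSeries G (n + 1), derivedSeries G (n + 1)⁆ from rfl,
        show derivedSeries (↥(commutator G)) (n + 1)
          = ⁅derivedSeries (↥(commutator G)) n, derivedSeries (↥(commutator G)) n⁆ from rfl,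
        Subgroup.map_commutator]
    exact Subgroup.commutator_mono ih ih

private lemma aux_of_surjective {G : Type*} [Group G] :
    Function.Surjective (Abelianization.of : G →* Abelianization G) :=
  fun x => Quotient.inductionOn' x fun g => ⟨g, rfl⟩

private lemma aux_finite : ∀ (n : ℕ) (G : Type*) [Group G], Group.FG G →
    (∀ g : G, IsOfFinOrder g) → derivedSeries G n = ⊥ → Finite G := by
  intro n
  induction n with
  | zero =>
    intro G _ _ _ h
    rw [derivedSeries_zero] at h
    have h1 : ∀ g : G, g = 1 := fun g => Subgroup.mem_bot.mp (h ▸ Subgroup.mem_top g)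
    have : Subsingleton G := ⟨fun a b => by rw [h1 a, h1 b]⟩
    exact Finite.of_subsingleton
  | succ n ih =>
    intro G _ hfg htor hder
    haveI : Group.FG G := hfg
    haveI : Group.FG (Abelianization G) :=
      Group.fg_of_surjective aux_of_surjective
    have htorA : Monoid.IsTorsion (Abelianization G) := by
      intro x
      obtain ⟨g, rfl⟩ := aux_of_surjective x
      exact Abelianization.of.isOfFinOrder (htor g)
    haveI : Finite (Abelianization G) := CommGroup.finite_of_fg_torsion _ htorA
    haveI : Finite (G ⧸ commutator G) := ‹Finite (Abelianization G)›
    haveI : (commutator G).FiniteIndex := ⟨Subgroup.index_ne_zero_of_finite⟩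
    haveI : Group.FG (commutator G) := Subgroup.fg_of_index_ne_zero _
    have hbot : derivedSeries (↥(commutator G)) n = ⊥ := by
      have h := (aux_map_derived (G := G) n).trans hder.le
      rw [le_bot_iff, Subgroup.map_eq_bot_iff_of_injective _ (Subgroup.subtype_injective _)] at h
      exact h
    have htorH : ∀ g : (↥(commutator G)), IsOfFinOrder g := fun g =>
      Submonoid.isOfFinOrder_coe.mp (htor (g : G))
    haveI : Finite (↥(commutator G)) := ih _ ‹_› htorH hbot
    exact Finite.of_equiv _ (Subgroup.groupEquivQuotientProdSubgroup (s := commutator G)).symm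

/-- A finitely generated solvable periodic group is finite. -/
theorem fg_solvable_periodic_finite {G : Type*} [Group G]
    (hfg : Group.FG G) (hsol : IsSolvable G) (htor : ∀ g : G, IsOfFinOrder g) :
    Finite G := by
  obtain ⟨n, hn⟩ := hsol.solvable
  exact aux_finite n G hfg htor hn
end

section
/- Let D be a division ring with center F, and let M be a subgroup of the unit group of the matrix ring M_n(D) such that the quotient M/(M ∩ F*) is a locally finite group. Then the F-subalgebra F[M] of M_n(D) generated by M is a locally finite-dimensional F-vector space, i.e., every finite subset of F[M] is contained in a finite-dimensional F-subspace that is a subring. -/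
/-- The subgroup `F* · I_n` of scalar matrices with central entries, inside the
unit group of the matrix ring `M_n(D)`. -/
noncomputable def centralScalarUnits (D : Type*) [DivisionRing D] (n : ℕ) :
    Subgroup (Matrix (Fin n) (Fin n) D)ˣ :=
  (Units.map ((Matrix.scalar (Fin n)).comp (Subring.center D).subtype).toMonoidHom).range

/-- If `M/(M ∩ F*)` is locally finite, then `F[M]` is a locally finite-dimensional
`F`-vector space: every finite subset of `F[M]` lies in a finite-dimensional
`F`-subspace of `F[M]` which is a subring. -/
theorem locallyFiniteDimensional_of_locallyFinite_mod_center
    {D : Type*} [DivisionRing D] (n : ℕ)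
    (M : Subgroup (Matrix (Fin n) (Fin n) D)ˣ)
    (hLF : ∀ S : Set (Matrix (Fin n) (Fin n) D)ˣ, S.Finite → S ⊆ (M : Set _) →
      ∃ U : Set (Matrix (Fin n) (Fin n) D)ˣ, U.Finite ∧
        ∀ x ∈ Subgroup.closure S, ∃ u ∈ U, ∃ z ∈ centralScalarUnits D n, x = z * u) :
    ∀ S : Set (Matrix (Fin n) (Fin n) D), S.Finite →
      S ⊆ (Subring.closure
        ((Set.range fun a : Subring.center D => Matrix.scalar (Fin n) (a : D)) ∪
          (Units.val '' (M : Set (Matrix (Fin n) (Fin n) D)ˣ))) : Set _) →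
      ∃ (R' : Subring (Matrix (Fin n) (Fin n) D)) (t : Finset (Matrix (Fin n) (Fin n) D)),
        S ⊆ (R' : Set _) ∧
        (R' : Set _) ⊆ (Subring.closure
          ((Set.range fun a : Subring.center D => Matrix.scalar (Fin n) (a : D)) ∪
            (Units.val '' (M : Set (Matrix (Fin n) (Fin n) D)ˣ))) : Set (Matrix (Fin n) (Fin n) D)) ∧
        (R' : Set _) ⊆ ((Submodule.span (Subring.center D) (t : Set (Matrix (Fin n) (Fin n) D)) : Submodule (Subring.center D) (Matrix (Fin n) (Fin n) D)) : Set (Matrix (Fin n) (Fin n) D)) := by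
  classical
  intro S hS hSsub
  set A : Set (Matrix (Fin n) (Fin n) D) :=
    Set.range fun a : Subring.center D => Matrix.scalar (Fin n) (a : D) with hA
  set B : Set (Matrix (Fin n) (Fin n) D) := Units.val '' (M : Set _) with hB
  -- scalar multiplication by central elements is multiplication by scalar matrices
  have hsmul : ∀ (c : Subring.center D) (x : Matrix (Fin n) (Fin n) D),
      c • x = Matrix.scalar (Fin n) (c : D) * x := by
    intro c x
    ext i j
    simp [Matrix.mul_apply, Matrix.scalar, Matrix.diagonal, Finset.sum_ite_eq,
      Subring.smul_def]
  -- Step 1: each element of the closure lies in the closure over a finite subset of M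
  have key : ∀ s ∈ Subring.closure (A ∪ B), ∃ T : Finset (Matrix (Fin n) (Fin n) D)ˣ,
      (T : Set ((Matrix (Fin n) (Fin n) D)ˣ)) ⊆ (M : Set _) ∧
      s ∈ Subring.closure (A ∪ Units.val '' (T : Set ((Matrix (Fin n) (Fin n) D)ˣ))) := by
    intro s hs
    induction hs using Subring.closure_induction with
    | mem x hx =>
      rcases hx with hx | hx
      · exact ⟨∅, by simp, Subring.subset_closure (Or.inl hx)⟩
      · rcases hx with ⟨u, hu, rfl⟩
        exact ⟨{u}, by simpa using hu,
          Subring.subset_closure (Or.inr ⟨u, by simp, rfl⟩)⟩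
    | zero => exact ⟨∅, by simp, zero_mem _⟩
    | one => exact ⟨∅, by simp, one_mem _⟩
    | add x y hx hy ihx ihy =>
      obtain ⟨T₁, hT₁, hx'⟩ := ihx
      obtain ⟨T₂, hT₂, hy'⟩ := ihy
      refine ⟨T₁ ∪ T₂, by simp [Set.union_subset_iff, hT₁, hT₂], add_mem ?_ ?_⟩
      · exact Subring.closure_mono (by gcongr <;> simp [Set.image_subset_iff]) hx'
      · exact Subring.closure_mono (by gcongr <;> simp [Set.image_subset_iff]) hy'
    | neg x hx ihx =>
      obtain ⟨T, hT, hx'⟩ := ihx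
      exact ⟨T, hT, neg_mem hx'⟩
    | mul x y hx hy ihx ihy =>
      obtain ⟨T₁, hT₁, hx'⟩ := ihx
      obtain ⟨T₂, hT₂, hy'⟩ := ihy
      refine ⟨T₁ ∪ T₂, by simp [Set.union_subset_iff, hT₁, hT₂], mul_mem ?_ ?_⟩
      · exact Subring.closure_mono (by gcongr <;> simp [Set.image_subset_iff]) hx'
      · exact Subring.closure_mono (by gcongr <;> simp [Set.image_subset_iff]) hy'
  -- Step 2: a single finite T works for all of S
  have key2 : ∀ S' : Set (Matrix (Fin n) (Fin n) D), S'.Finite →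
      S' ⊆ (Subring.closure (A ∪ B) : Set _) →
      ∃ T : Finset (Matrix (Fin n) (Fin n) D)ˣ,
      (T : Set ((Matrix (Fin n) (Fin n) D)ˣ)) ⊆ (M : Set _) ∧
      S' ⊆ (Subring.closure (A ∪ Units.val '' (T : Set ((Matrix (Fin n) (Fin n) D)ˣ))) : Set _) := by
    intro S' hS'
    refine Set.Finite.induction_on (motive := fun s _ => s ⊆ (Subring.closure (A ∪ B) : Set _) →
      ∃ T : Finset (Matrix (Fin n) (Fin n) D)ˣ,
      (T : Set ((Matrix (Fin n) (Fin n) D)ˣ)) ⊆ (M : Set _) ∧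
      s ⊆ (Subring.closure (A ∪ Units.val '' (T : Set ((Matrix (Fin n) (Fin n) D)ˣ))) : Set _))
      S' hS' (fun _ => ⟨∅, by simp, by simp⟩) ?_
    intro a s ha hsf ih hsub
    obtain ⟨T₁, hT₁, hs₁⟩ := ih (Set.Subset.trans (Set.subset_insert a s) hsub)
    obtain ⟨T₂, hT₂, ha₂⟩ := key a (hsub (Set.mem_insert a s))
    refine ⟨T₁ ∪ T₂, by simp [Set.union_subset_iff, hT₁, hT₂], ?_⟩
    intro x hx
    rcases hx with rfl | hx
    · exact Subring.closure_mono (by gcongr <;> simp [Set.image_subset_iff]) ha₂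
    · exact Subring.closure_mono (by gcongr <;> simp [Set.image_subset_iff]) (hs₁ hx)
  obtain ⟨T, hTM, hST⟩ := key2 S hS hSsub
  -- Step 3: apply local finiteness
  obtain ⟨U, hUfin, hU⟩ := hLF (T : Set _) (Finset.finite_toSet T) hTM
  set G : Subgroup (Matrix (Fin n) (Fin n) D)ˣ := Subgroup.closure (T : Set _) with hG
  have hGM : G ≤ M := (Subgroup.closure_le M).2 hTM
  -- the span of the image of G
  set sp : Submodule (Subring.center D) (Matrix (Fin n) (Fin n) D) :=
    Submodule.span (Subring.center D) (Units.val '' (G : Set _)) with hsp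
  have hone : (1 : Matrix (Fin n) (Fin n) D) ∈ sp :=
    Submodule.subset_span ⟨1, one_mem G, rfl⟩
  have hmulmem : ∀ x ∈ sp, ∀ y ∈ sp, x * y ∈ sp := by
    intro x hx y hy
    have : x * y ∈ sp * sp := Submodule.mul_mem_mul hx hy
    rw [hsp, Submodule.span_mul_span] at this
    refine Submodule.span_le.2 ?_ this
    rintro _ ⟨_, ⟨g₁, hg₁, rfl⟩, _, ⟨g₂, hg₂, rfl⟩, rfl⟩
    exact Submodule.subset_span ⟨g₁ * g₂, mul_mem hg₁ hg₂, rfl⟩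
  -- sp as a subring
  refine ⟨{ carrier := sp
            one_mem' := hone
            mul_mem' := fun {x y} hx hy => hmulmem x hx y hy
            zero_mem' := zero_mem sp
            add_mem' := fun {x y} hx hy => add_mem hx hy
            neg_mem' := fun {x} hx => neg_mem hx },
          (hUfin.toFinset.image Units.val), ?_, ?_, ?_⟩
  · -- S ⊆ sp
    refine Set.Subset.trans hST ?_
    have : Subring.closure (A ∪ Units.val '' (T : Set ((Matrix (Fin n) (Fin n) D)ˣ))) ≤
        { carrier := sp
          one_mem' := hone
          mul_mem' := fun {x y} hx hy => hmulmem x hx y hy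
          zero_mem' := zero_mem sp
          add_mem' := fun {x y} hx hy => add_mem hx hy
          neg_mem' := fun {x} hx => neg_mem hx } := by
      rw [Subring.closure_le]
      rintro x (⟨c, rfl⟩ | ⟨u, hu, rfl⟩)
      · show Matrix.scalar (Fin n) (c : D) ∈ sp
        have : Matrix.scalar (Fin n) (c : D) = c • (1 : Matrix (Fin n) (Fin n) D) := by
          rw [hsmul, mul_one]
        rw [this]
        exact Submodule.smul_mem sp c hone
      · exact Submodule.subset_span ⟨u, Subgroup.subset_closure hu, rfl⟩
    exact this
  · -- sp ⊆ big closure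
    intro x hx
    refine Submodule.span_induction ?_ ?_ ?_ ?_ hx
    · rintro _ ⟨g, hg, rfl⟩
      exact Subring.subset_closure (Or.inr ⟨g, hGM hg, rfl⟩)
    · exact zero_mem _
    · intro a b _ _ ha hb; exact add_mem ha hb
    · intro c a _ ha
      rw [hsmul]
      exact mul_mem (Subring.subset_closure (Or.inl ⟨c, rfl⟩)) ha
  · -- sp ⊆ span t
    intro x hx
    refine Submodule.span_le.2 ?_ hx
    rintro _ ⟨g, hg, rfl⟩
    obtain ⟨u, huU, z, hz, rfl⟩ := hU g hg
    obtain ⟨w, rfl⟩ := hz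
    rw [Units.val_mul, Units.coe_map]
    have : ((((Matrix.scalar (Fin n)).comp (Subring.center D).subtype).toMonoidHom :
        Subring.center D →* Matrix (Fin n) (Fin n) D) ((w : Subring.center D)) :
        Matrix (Fin n) (Fin n) D) = Matrix.scalar (Fin n) (((w : Subring.center D)) : D) := rfl
    rw [this, ← hsmul]
    refine Submodule.smul_mem _ _ (Submodule.subset_span ?_)
    simp only [Finset.coe_image, Set.Finite.coe_toFinset]
    exact ⟨u, huU, rfl⟩
end

section
/- Let G be a group whose center Z(G) has finite index in G. Then the commutator subgroup G' is finite. -/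
open scoped commutatorElement

theorem comm_mul_center {G : Type*} [Group G] {a b z w : G} (hz : z ∈ Subgroup.center G)
    (hw : w ∈ Subgroup.center G) : ⁅a * z, b * w⁆ = ⁅a, b⁆ := by
  have hz' := Subgroup.mem_center_iff.mp hz
  have hw' := Subgroup.mem_center_iff.mp hw
  simp only [commutatorElement_def, mul_inv_rev]
  calc a * z * (b * w) * (z⁻¹ * a⁻¹) * (w⁻¹ * b⁻¹)
      = a * (z * (b * w)) * (z⁻¹ * a⁻¹) * (w⁻¹ * b⁻¹) := by group
    _ = a * ((b * w) * z) * (z⁻¹ * a⁻¹) * (w⁻¹ * b⁻¹) := by rw [← hz' (b * w)]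
    _ = a * b * (w * a⁻¹) * (w⁻¹ * b⁻¹) := by group
    _ = a * b * (a⁻¹ * w) * (w⁻¹ * b⁻¹) := by rw [hw' a⁻¹]
    _ = a * b * a⁻¹ * b⁻¹ := by group

/-- Schur's theorem: if the center has finite index, then the commutator subgroup is finite. -/
theorem commutator_finite_of_center_finiteIndex {G : Type*} [Group G]
    (h : Finite (G ⧸ Subgroup.center G)) :
    Finite ↥(commutator G) := by
  have hfin : Finite (commutatorSet G) := by
    let f : (G ⧸ Subgroup.center G) × (G ⧸ Subgroup.center G) → G :=
      fun p => ⁅p.1.out, p.2.out⁆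
    apply Finite.Set.subset (Set.range f)
    rintro x ⟨a, b, rfl⟩
    refine ⟨(↑a, ↑b), ?_⟩
    have ha : (a : G ⧸ Subgroup.center G).out⁻¹ * a ∈ Subgroup.center G := by
      rw [← QuotientGroup.eq, QuotientGroup.out_eq']
    have hb : (b : G ⧸ Subgroup.center G).out⁻¹ * b ∈ Subgroup.center G := by
      rw [← QuotientGroup.eq, QuotientGroup.out_eq']
    have : f (↑a, ↑b) = ⁅(a : G ⧸ Subgroup.center G).out * ((a : G ⧸ Subgroup.center G).out⁻¹ * a),
        (b : G ⧸ Subgroup.center G).out * ((b : G ⧸ Subgroup.center G).out⁻¹ * b)⁆ := by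
      rw [comm_mul_center ha hb]
    rw [this]
    group
  infer_instance
end

section
/- Let D be a division ring with center F and suppose M is an abelian-by-finite subgroup of D* containing F*, with an abelian normal subgroup N of finite index k such that the division subring L = F(N) generated by F and N is a subfield of D normalized by M. If x₁,...,x_k is a transversal of N in M, then Δ = L·x₁ + ... + L·x_k is a division subring of D containing F and M, and Δ is finite-dimensional over L (of dimension at most k). -/
/-- Let `D` be a division ring with center `F` and `M ≤ Dˣ` abelian-by-finite containing
`F*`, with an abelian normal subgroup `N` of finite index `k` such that the division
subring `L = F(N)` is a (commutative) subfield of `D` normalized by `M`.  If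
`x₁, …, x_k` is a transversal of `N` in `M`, then `Δ = L·x₁ + ⋯ + L·x_k` is a division
subring of `D` containing `F` and `M`, of dimension at most `k` over `L`. -/
theorem divisionSubring_of_abelianByFinite {D : Type*} [DivisionRing D]
    (M N : Subgroup Dˣ)
    (hF : ∀ u : Dˣ, (u : D) ∈ Subring.center D → u ∈ M)
    (hNM : N ≤ M) (hNnormal : (N.subgroupOf M).Normal)
    (hNab : ∀ a ∈ N, ∀ b ∈ N, a * b = b * a)
    (L : Subfield D)
    (hL : L = Subfield.closure ((Subring.center D : Set D) ∪ (Units.val '' (N : Set Dˣ))))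
    (hLcomm : ∀ x ∈ L, ∀ y ∈ L, x * y = y * x)
    (hLnorm : ∀ m ∈ M, ∀ l ∈ L, (m : D) * l * ((m⁻¹ : Dˣ) : D) ∈ L)
    (k : ℕ) (x : Fin k → Dˣ) (hxM : ∀ i, x i ∈ M)
    (hxT : ∀ m ∈ M, ∃! i : Fin k, m * (x i)⁻¹ ∈ N) :
    -- Δ is the L-span of x₁, …, x_k
    ∀ Δ : Submodule L D, Δ = Submodule.span L (Set.range fun i => ((x i : Dˣ) : D)) →
      (∃ R' : Subring D, (R' : Set D) = (Δ : Set D)) ∧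
      (∀ d ∈ Δ, d ≠ 0 → d⁻¹ ∈ Δ) ∧
      (∀ f ∈ Subring.center D, f ∈ Δ) ∧
      (∀ m ∈ M, ((m : Dˣ) : D) ∈ Δ) ∧
      Module.rank L Δ ≤ k := by
  intro Δ hΔ
  subst hΔ
  set Δ := Submodule.span L (Set.range fun i => ((x i : Dˣ) : D)) with hΔ
  have hsmul : ∀ (l : L) (d : D), l • d = (l : D) * d := fun _ _ => rfl
  have hNL : ∀ n ∈ N, ((n : Dˣ) : D) ∈ L := by
    intro n hn
    rw [hL]; exact Subfield.subset_closure (Or.inr ⟨n, hn, rfl⟩)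
  have hFL : ∀ f ∈ Subring.center D, f ∈ L := fun f hf => by
    rw [hL]; exact Subfield.subset_closure (Or.inl hf)
  have hxΔ : ∀ i, ((x i : Dˣ) : D) ∈ Δ := fun i => Submodule.subset_span ⟨i, rfl⟩
  -- M ⊆ Δ
  have hMΔ : ∀ m ∈ M, ((m : Dˣ) : D) ∈ Δ := by
    intro m hm
    obtain ⟨i, hi, -⟩ := hxT m hm
    have hmx : (m : D) = ((m * (x i)⁻¹ : Dˣ) : D) * ((x i : Dˣ) : D) := by
      rw [← Units.val_mul, inv_mul_cancel_right]
    rw [hmx, ← hsmul ⟨_, hNL _ hi⟩]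
    exact Δ.smul_mem _ (hxΔ i)
  -- key : left multiplication by generators preserves Δ
  have key : ∀ i, ∀ b ∈ Δ, ((x i : Dˣ) : D) * b ∈ Δ := by
    intro i b hb
    induction hb using Submodule.span_induction with
    | mem y hy =>
        obtain ⟨j, rfl⟩ := hy
        simpa using hMΔ _ (mul_mem (hxM i) (hxM j))
    | zero => simp
    | add y z _ _ ihy ihz => rw [mul_add]; exact Δ.add_mem ihy ihz
    | smul l y _ ih =>
        have hconj : ((x i : Dˣ) : D) * (l : D) * (((x i)⁻¹ : Dˣ) : D) ∈ L :=
          hLnorm _ (hxM i) _ l.2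
        have heq : ((x i : Dˣ) : D) * (l • y) =
            (((x i : Dˣ) : D) * (l : D) * (((x i)⁻¹ : Dˣ) : D)) * (((x i : Dˣ) : D) * y) := by
          rw [hsmul, mul_assoc, mul_assoc, ← mul_assoc (((x i)⁻¹ : Dˣ) : D), Units.inv_mul,
            one_mul, ← mul_assoc]
        rw [heq, ← hsmul ⟨_, hconj⟩]
        exact Δ.smul_mem _ ih
  have hmul : ∀ a ∈ Δ, ∀ b ∈ Δ, a * b ∈ Δ := by
    intro a ha b hb
    induction ha using Submodule.span_induction with
    | mem y hy => obtain ⟨j, rfl⟩ := hy; exact key j b hb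
    | zero => simp
    | add y z _ _ ihy ihz => rw [add_mul]; exact Δ.add_mem ihy ihz
    | smul l y _ ih =>
        rw [hsmul, mul_assoc, ← hsmul l]
        exact Δ.smul_mem _ ih
  have hone : (1 : D) ∈ Δ := by
    simpa using hMΔ 1 (hF 1 (by simp [Subring.mem_center_iff]))
  have hFΔ : ∀ f ∈ Subring.center D, f ∈ Δ := by
    intro f hf
    have := Δ.smul_mem ⟨f, hFL f hf⟩ hone
    rwa [hsmul, mul_one] at this
  have hfin : FiniteDimensional L Δ :=
    FiniteDimensional.span_of_finite L (Set.finite_range _)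
  refine ⟨⟨{ carrier := Δ
             mul_mem' := fun ha hb => hmul _ ha _ hb
             one_mem' := hone
             add_mem' := fun ha hb => Δ.add_mem ha hb
             zero_mem' := Δ.zero_mem
             neg_mem' := fun ha => Δ.neg_mem ha }, rfl⟩, ?_, hFΔ, hMΔ, ?_⟩
  · intro d hd hd0
    let f : Δ →ₗ[L] Δ :=
      { toFun := fun a => ⟨(a : D) * d, hmul _ a.2 _ hd⟩
        map_add' := fun a b => by ext; simp [add_mul]
        map_smul' := fun l a => by ext; simp [hsmul, mul_assoc] }
    have hinj : Function.Injective f := by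
      intro a b hab
      have : (a : D) * d = (b : D) * d := congrArg Subtype.val hab
      exact Subtype.ext (mul_right_cancel₀ hd0 this)
    obtain ⟨a, ha⟩ := (LinearMap.injective_iff_surjective.mp hinj) ⟨1, hone⟩
    have ha' : (a : D) * d = 1 := congrArg Subtype.val ha
    have : (a : D) = d⁻¹ := eq_inv_of_mul_eq_one_left ha'
    exact this ▸ a.2
  · refine (rank_span_le _).trans ?_
    simpa using Cardinal.mk_range_le_lift (f := fun i : Fin k => ((x i : Dˣ) : D))
end

section
/- Let D be a division ring with center F, G a subnormal subgroup of D*, and M a non-abelian solvable maximal subgroup of G, with K a maximal subfield of D such that M/(K* ∩ G) ≅ Z/pZ for a prime p as in the structure theorem. Then for any x ∈ M \ K, one has x^p ∈ F and D = F[M] = ⊕_{i=1}^{p} K·x^i. -/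
/-- A subgroup `H` of a group is subnormal if there is a finite chain of subgroups
from `H` up to the whole group, each normal in the next. -/
def IsSubnormal {Γ : Type*} [Group Γ] (H : Subgroup Γ) : Prop :=
  ∃ (k : ℕ) (s : ℕ → Subgroup Γ), s 0 = H ∧ s k = ⊤ ∧
    ∀ i < k, s i ≤ s (i + 1) ∧ ((s i).subgroupOf (s (i + 1))).Normal

variable {D : Type*} [DivisionRing D]

/-- Inclusion of the center into a subfield containing it. -/
def centerInclusion (K : Subfield D) (h : ∀ x ∈ Subring.center D, x ∈ K) :
    (Subring.center D) →+* K where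
  toFun a := ⟨(a : D), h a a.2⟩
  map_one' := rfl
  map_mul' _ _ := rfl
  map_zero' := rfl
  map_add' _ _ := rfl

/-- The dimension of a subfield `K` over the center of `D`. -/
noncomputable def finrankOverCenter (K : Subfield D)
    (hFK : ∀ x ∈ Subring.center D, x ∈ K) : ℕ :=
  letI : Module (Subring.center D) K := Module.compHom K (centerInclusion K hFK)
  Module.finrank (Subring.center D) K

/-- The group of units of `D` lying in the subfield `K`. -/
def Subfield.unitsIn (K : Subfield D) : Subgroup Dˣ where
  carrier := {u | (u : D) ∈ K}
  mul_mem' ha hb := K.mul_mem ha hb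
  one_mem' := K.one_mem
  inv_mem' := fun {u} hu => by
    simpa [Units.val_inv_eq_inv_val] using K.inv_mem hu

theorem aux_closure_comm {D : Type*} [Ring D] {s : Set D}
    (hs : ∀ a ∈ s, ∀ b ∈ s, a * b = b * a) :
    ∀ a ∈ Subring.closure s, ∀ b ∈ Subring.closure s, a * b = b * a := by
  have step1 : ∀ a ∈ s, ∀ b ∈ Subring.closure s, a * b = b * a := by
    intro a ha b hb
    have h : Subring.closure s ≤ Subring.centralizer {a} :=
      Subring.closure_le.2 (fun z hz => Subring.mem_centralizer_iff.2
        (fun g hg => by obtain rfl : g = a := hg; exact hs g ha z hz))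
    exact Subring.mem_centralizer_iff.1 (h hb) a rfl
  intro a ha b hb
  have h : Subring.closure s ≤ Subring.centralizer {b} :=
    Subring.closure_le.2 (fun z hz => Subring.mem_centralizer_iff.2
      (fun g hg => by obtain rfl : g = b := hg; exact (step1 z hz g hb).symm))
  exact (Subring.mem_centralizer_iff.1 (h ha) b rfl).symm

theorem aux_inv_mem {D : Type*} [DivisionRing D]
    [FiniteDimensional (Subring.center D) D]
    (R : Subring D) (hF : ∀ a ∈ Subring.center D, a ∈ R) :
    ∀ a ∈ R, a⁻¹ ∈ R := by
  intro a haR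
  rcases eq_or_ne a 0 with rfl | h0
  · simpa using R.zero_mem
  set F := Subring.center D
  let S : Submodule F D :=
    { carrier := R
      add_mem' := fun h1 h2 => R.add_mem h1 h2
      zero_mem' := R.zero_mem
      smul_mem' := fun c {x} hx => R.mul_mem (hF _ c.2) hx }
  let f : S →ₗ[F] S :=
    { toFun := fun y => ⟨a * y, R.mul_mem haR y.2⟩
      map_add' := fun y z => by
        ext; simp [mul_add]
      map_smul' := fun c y => by
        ext
        show a * ((c : D) * y) = (c : D) * (a * y)
        rw [← mul_assoc, Subring.mem_center_iff.1 c.2 a, mul_assoc] }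
  have hinj : Function.Injective f := by
    intro y z hyz
    have : a * (y : D) = a * (z : D) := congrArg Subtype.val hyz
    exact Subtype.ext (mul_left_cancel₀ h0 this)
  have hsurj : Function.Surjective f := (LinearMap.injective_iff_surjective).1 hinj
  obtain ⟨b, hb⟩ := hsurj ⟨1, R.one_mem⟩
  have hab : a * (b : D) = 1 := congrArg Subtype.val hb
  have : a⁻¹ = (b : D) := inv_eq_of_mul_eq_one_right hab
  rw [this]; exact b.2

set_option maxHeartbeats 2000000 in
/-- Let `D` be a division ring with center `F`, `G` subnormal in `Dˣ`, `M` a non-abelian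
solvable maximal subgroup of `G`, and `K` a maximal subfield of `D` with
`M/(K* ∩ G) ≅ ℤ/pℤ` for a prime `p` as in the structure theorem.  Then for every
`x ∈ M \ K` one has `x^p ∈ F` and `D = F[M] = ⊕_{i=1}^{p} K·xⁱ`. -/
theorem power_central_and_decomposition (G M : Subgroup Dˣ) (hG : IsSubnormal G)
    (hmax : M < G ∧ ∀ H : Subgroup Dˣ, M ≤ H → H ≤ G → H = M ∨ H = G)
    (hsol : IsSolvable ↥M)
    (hnonab : ¬ ∀ x ∈ M, ∀ y ∈ M, x * y = y * x)
    (K : Subfield D) (hcomm : ∀ x y : K, x * y = y * x)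
    (hFK : ∀ x ∈ Subring.center D, x ∈ K)
    (hKmax : ∀ K' : Subfield D, (∀ x y : K', x * y = y * x) → K ≤ K' → K' = K)
    (p : ℕ) (hp : p.Prime)
    (hKF : finrankOverCenter K hFK = p)
    (hDF : Module.finrank (Subring.center D) D = p ^ 2)
    (hquot : ∃ φ : ↥M →* Multiplicative (ZMod p), Function.Surjective φ ∧
      φ.ker = (K.unitsIn ⊓ G).subgroupOf M) :
    -- D = F[M]
    Subring.closure ((Subring.center D : Set D) ∪ (Units.val '' (M : Set Dˣ))) = ⊤ ∧
    ∀ x : Dˣ, x ∈ M → (x : D) ∉ K →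
      -- x^p is central
      ((x : D) ^ p ∈ Subring.center D ∧
      -- D = ⊕_{i=1}^{p} K·xⁱ : the powers x, x², …, x^p span D over K …
      (∀ d : D, ∃ c : Fin p → D, (∀ i, c i ∈ K) ∧
        d = ∑ i : Fin p, c i * (x : D) ^ ((i : ℕ) + 1)) ∧
      -- … and are left linearly independent over K
      (∀ c : Fin p → D, (∀ i, c i ∈ K) →
        (∑ i : Fin p, c i * (x : D) ^ ((i : ℕ) + 1)) = 0 → ∀ i, c i = 0)) := by
  classical
  haveI hpf : Fact p.Prime := ⟨hp⟩
  set F := Subring.center D with hFdef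
  haveI hfin : FiniteDimensional F D :=
    FiniteDimensional.of_finrank_pos (by rw [hDF]; exact pow_pos hp.pos 2)
  obtain ⟨φ, hφsurj, hφker⟩ := hquot
  -- commutativity of K at the level of D-elements
  have hcommD : ∀ a ∈ K, ∀ b ∈ K, a * b = b * a := by
    intro a ha b hb
    exact congrArg Subtype.val (hcomm ⟨a, ha⟩ ⟨b, hb⟩)
  -- centralizer of K is K
  have hcent : ∀ z : D, (∀ k ∈ K, z * k = k * z) → z ∈ K := by
    intro z hz
    set s2 : Set D := (K : Set D) ∪ {z} with hs2
    have hs2comm : ∀ a ∈ s2, ∀ b ∈ s2, a * b = b * a := by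
      rintro a (ha | ha) b (hb | hb)
      · exact hcommD a ha b hb
      · obtain rfl : b = z := hb
        exact (hz a ha).symm
      · obtain rfl : a = z := ha
        exact hz b hb
      · rw [Set.mem_singleton_iff] at ha hb
        rw [ha, hb]
    have hR2comm := aux_closure_comm hs2comm
    have hR2F : ∀ a ∈ Subring.center D, a ∈ Subring.closure s2 := fun a ha =>
      Subring.subset_closure (Or.inl (hFK a ha))
    have hinv := @aux_inv_mem D _ hfin (Subring.closure s2) hR2F
    let K' : Subfield D := ⟨Subring.closure s2, fun y hy => hinv y hy⟩
    have hKK' : K ≤ K' := fun k hk => Subring.subset_closure (Or.inl hk)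
    have hEQ : K' = K := hKmax K' (fun a b => Subtype.ext (hR2comm a a.2 b b.2)) hKK'
    have hzR2 : z ∈ K' := Subring.subset_closure (Or.inr rfl)
    rw [← hEQ]
    exact hzR2
  -- a noncentral element u of M lying in K
  obtain ⟨u', hu'ker, w', hw'⟩ :
      ∃ u' : ↥M, u' ∈ φ.ker ∧ ∃ w' : ↥M, w' * u' ≠ u' * w' := by
    by_contra hcon
    push_neg at hcon
    apply hnonab
    intro a ha b hb
    have hle : φ.ker ≤ Subgroup.center ↥M := by
      intro g hg
      rw [Subgroup.mem_center_iff]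
      exact fun h => hcon g hg h
    have := commutative_of_cyclic_center_quotient φ hle ⟨a, ha⟩ ⟨b, hb⟩
    exact congrArg Subtype.val this
  set u : Dˣ := (u' : Dˣ) with hudef
  have huM : u ∈ M := u'.2
  have huK : (u : D) ∈ K := by
    have h1 : u' ∈ (K.unitsIn ⊓ G).subgroupOf M := by rw [← hφker]; exact hu'ker
    exact (Subgroup.mem_subgroupOf.1 h1).1
  have hu_noncent : (u : D) ∉ F := by
    intro hc
    apply hw'
    apply Subtype.ext
    apply Units.ext
    exact Subring.mem_center_iff.1 hc ((w' : Dˣ) : D)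
  -- the subfield E = F(u) and the fact K = E
  set s : Set D := (F : Set D) ∪ {(u : D)} with hsdef
  set R : Subring D := Subring.closure s with hRdef
  have hKR : ∀ k ∈ K, k ∈ R := by
    have hscomm : ∀ a ∈ s, ∀ b ∈ s, a * b = b * a := by
      rintro a (ha | ha) b (hb | hb)
      · exact Subring.mem_center_iff.1 hb a
      · obtain rfl : b = (u : D) := hb
        exact (Subring.mem_center_iff.1 ha ((u : Dˣ) : D)).symm
      · obtain rfl : a = (u : D) := ha
        exact Subring.mem_center_iff.1 hb ((u : Dˣ) : D)
      · obtain rfl : a = (u : D) := ha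
        obtain rfl : b = (u : D) := hb
        rfl
    have hRF : ∀ a ∈ Subring.center D, a ∈ R := fun a ha =>
      Subring.subset_closure (Or.inl ha)
    have hRinv := @aux_inv_mem D _ hfin R hRF
    let E : Subfield D := ⟨R, fun y hy => hRinv y hy⟩
    have hFE : ∀ a ∈ Subring.center D, a ∈ E := hRF
    have huE : (u : D) ∈ E := Subring.subset_closure (Or.inr rfl)
    have hEK : E ≤ K := by
      intro y hy
      refine Subring.closure_le.2 ?_ hy
      rintro a (ha | ha)
      · exact hFK a ha
      · obtain rfl : a = (u : D) := ha
        exact huK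
    letI instFK2 : Module F ↥K := Module.compHom ↥K (centerInclusion K hFK)
    letI instFE : Module F ↥E := Module.compHom ↥E (centerInclusion E hFE)
    letI instEK : Module ↥E ↥K := Module.compHom ↥K (Subfield.inclusion hEK)
    letI : IsScalarTower F ↥E ↥K :=
      ⟨fun a e k => Subtype.ext (mul_assoc (a : D) (e : D) (k : D))⟩
    haveI : Module.Free F ↥E := Module.Free.of_divisionRing F ↥E
    haveI : Module.Free ↥E ↥K := Module.Free.of_divisionRing ↥E ↥K
    have t1 : Module.finrank F ↥E * Module.finrank ↥E ↥K = p := by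
      rw [Module.finrank_mul_finrank]; exact hKF
    have hdvd : Module.finrank F ↥E ∣ p := ⟨Module.finrank ↥E ↥K, t1.symm⟩
    rcases hp.eq_one_or_self_of_dvd _ hdvd with h1 | hP
    · exfalso
      have hone : (1 : ↥E) ≠ 0 := one_ne_zero
      have hspan1 : Submodule.span F {(1 : ↥E)} = ⊤ :=
        (finrank_eq_one_iff_of_nonzero (1 : ↥E) hone).1 h1
      have hmem : (⟨(u : D), huE⟩ : ↥E) ∈ Submodule.span F {(1 : ↥E)} := by
        rw [hspan1]; exact Submodule.mem_top
      obtain ⟨cc, hcc⟩ := Submodule.mem_span_singleton.1 hmem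
      apply hu_noncent
      have hval : ((u : Dˣ) : D) = (cc : D) := by
        have h2 := congrArg Subtype.val hcc
        have h3 : ((cc • (1 : ↥E) : ↥E) : D) = (cc : D) * 1 := rfl
        rw [h3] at h2
        have h4 : (cc : D) * 1 = ((u : Dˣ) : D) := h2
        rw [← h4, mul_one]
      rw [hval]
      exact cc.2
    · have t2 : Module.finrank ↥E ↥K = 1 := by
        rw [hP] at t1
        have := Nat.eq_of_mul_eq_mul_left hp.pos (t1.trans (mul_one p).symm)
        exact this
      intro k hk
      have hone : (1 : ↥K) ≠ 0 := one_ne_zero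
      have hspan1 : Submodule.span ↥E {(1 : ↥K)} = ⊤ :=
        (finrank_eq_one_iff_of_nonzero (1 : ↥K) hone).1 t2
      have hmem : (⟨k, hk⟩ : ↥K) ∈ Submodule.span ↥E {(1 : ↥K)} := by
        rw [hspan1]; exact Submodule.mem_top
      obtain ⟨cc, hcc⟩ := Submodule.mem_span_singleton.1 hmem
      have hval : k = (cc : D) := by
        have h2 := congrArg Subtype.val hcc
        have h3 : ((cc • (1 : ↥K) : ↥K) : D) = (cc : D) * 1 := rfl
        rw [h3] at h2
        have h4 : (cc : D) * 1 = k := h2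
        rw [← h4, mul_one]
      rw [hval]
      exact cc.2
  -- conjugation by elements of M preserves K
  have hconj0 : ∀ w : Dˣ, w ∈ M → (w : D) * (u : D) * ((w⁻¹ : Dˣ) : D) ∈ K := by
    intro w hw
    have hn : (⟨w, hw⟩ * u' * (⟨w, hw⟩)⁻¹ : ↥M) ∈ φ.ker :=
      (MonoidHom.normal_ker φ).conj_mem u' hu'ker ⟨w, hw⟩
    rw [hφker] at hn
    exact (Subgroup.mem_subgroupOf.1 hn).1
  have hconj : ∀ w : Dˣ, w ∈ M → ∀ k ∈ K, (w : D) * k * ((w⁻¹ : Dˣ) : D) ∈ K := by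
    intro w hw k hk
    let ψ : D →+* D :=
      { toFun := fun d => (w : D) * d * ((w⁻¹ : Dˣ) : D)
        map_one' := by simp
        map_mul' := fun a b => by simp [mul_assoc]
        map_zero' := by simp
        map_add' := fun a b => by simp [mul_add, add_mul] }
    have hle : R ≤ K.toSubring.comap ψ := by
      rw [hRdef, Subring.closure_le]
      rintro a (ha | ha)
      · have hψ : ψ a = a := by
          show (w : D) * a * ((w⁻¹ : Dˣ) : D) = a
          rw [Subring.mem_center_iff.1 ha ((w : Dˣ) : D), mul_assoc, Units.mul_inv, mul_one]
        show ψ a ∈ K.toSubring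
        rw [hψ]
        exact hFK a (Subring.mem_center_iff.2 (Subring.mem_center_iff.1 ha))
      · obtain rfl : a = (u : D) := ha
        show ψ (u : D) ∈ K.toSubring
        exact hconj0 w hw
    exact hle (hKR k hk)
  -- finrank of D over K is p
  letI instFK : Module F K := Module.compHom K (centerInclusion K hFK)
  have hKF' : Module.finrank F ↥K = p := hKF
  letI instTow : IsScalarTower F K D :=
    ⟨fun a k d => mul_assoc (a : D) (k : D) d⟩
  haveI : Module.Free F ↥K := Module.Free.of_divisionRing F ↥K
  haveI : Module.Free ↥K D := Module.Free.of_divisionRing ↥K D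
  have hKD : Module.finrank K D = p := by
    have t2 : Module.finrank F ↥K * Module.finrank ↥K D = p ^ 2 := by
      rw [Module.finrank_mul_finrank]; exact hDF
    rw [hKF', pow_two] at t2
    exact Nat.eq_of_mul_eq_mul_left hp.pos t2
  -- the main statement for a fixed x
  have main : ∀ x : Dˣ, x ∈ M → (x : D) ∉ K →
      ((x : D) ^ p ∈ K ∧
      (∀ d : D, ∃ c : Fin p → D, (∀ i, c i ∈ K) ∧
        d = ∑ i : Fin p, c i * (x : D) ^ ((i : ℕ) + 1)) ∧
      (∀ c : Fin p → D, (∀ i, c i ∈ K) →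
        (∑ i : Fin p, c i * (x : D) ^ ((i : ℕ) + 1)) = 0 → ∀ i, c i = 0)) := by
    intro x hxM hxK
    have hX0 : (x : D) ≠ 0 := Units.ne_zero x
    have hxpK : (x : D) ^ p ∈ K := by
      have hker : (⟨x, hxM⟩ : ↥M) ^ p ∈ φ.ker := by
        rw [MonoidHom.mem_ker, map_pow]
        have hg : ∀ g : Multiplicative (ZMod p), g ^ p = 1 := by
          intro g
          have h1 : g ^ p = Multiplicative.ofAdd (p • Multiplicative.toAdd g) := by
            rw [ofAdd_nsmul, ofAdd_toAdd]
          rw [h1, nsmul_eq_mul, ZMod.natCast_self, zero_mul]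
          rfl
        exact hg _
      rw [hφker] at hker
      have h2 := (Subgroup.mem_subgroupOf.1 hker).1
      have h3 : ((x ^ p : Dˣ) : D) ∈ K := h2
      rwa [Units.val_pow_eq_pow_val] at h3
    have hvp : ∀ i : ℕ, ((x ^ i : Dˣ) : D) = (x : D) ^ i := fun i =>
      Units.val_pow_eq_pow_val x i
    set σfn : Dˣ → D → D := fun w k => (w : D) * k * ((w⁻¹ : Dˣ) : D) with hσdef
    have hσmem : ∀ w : Dˣ, w ∈ M → ∀ k ∈ K, σfn w k ∈ K := fun w hw k hk => hconj w hw k hk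
    have hσ1 : ∀ (w : Dˣ) (k : D), (w : D) * k = σfn w k * (w : D) := by
      intro w k
      show _ = ((w : D) * k * ((w⁻¹ : Dˣ) : D)) * (w : D)
      rw [mul_assoc ((w : D) * k), Units.inv_mul, mul_one]
    have hσcomp : ∀ (w1 w2 : Dˣ) (k : D), σfn w1 (σfn w2 k) = σfn (w1 * w2) k := by
      intro w1 w2 k
      show (w1 : D) * ((w2 : D) * k * ((w2⁻¹ : Dˣ) : D)) * ((w1⁻¹ : Dˣ) : D)
          = (((w1 * w2 : Dˣ)) : D) * k * ((((w1 * w2)⁻¹ : Dˣ)) : D)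
      rw [mul_inv_rev]
      simp [mul_assoc]
    have hσone : ∀ k : D, σfn 1 k = k := by
      intro k
      show ((1 : Dˣ) : D) * k * (((1 : Dˣ)⁻¹ : Dˣ) : D) = k
      simp
    have hx_not : ¬ ∀ k ∈ K, (x : D) * k = k * (x : D) := fun h => hxK (hcent _ h)
    have hxp_comm : ∀ k ∈ K, (x : D) ^ p * k = k * (x : D) ^ p := fun k hk =>
      hcommD _ hxpK k hk
    have hdist : ∀ a : ℕ, 0 < a → a < p → ¬ (∀ k ∈ K, (x : D) ^ a * k = k * (x : D) ^ a) := by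
      intro a ha0 hap hca
      have hcop : ¬ (p ∣ a) := Nat.not_dvd_of_pos_of_lt ha0 hap
      have hZa : (a : ZMod p) ≠ 0 := fun h => hcop ((ZMod.natCast_eq_zero_iff a p).1 h)
      haveI : NeZero p := ⟨hp.ne_zero⟩
      set s0 : ℕ := ((a : ZMod p)⁻¹).val with hs0def
      have hmod : ((s0 * a : ℕ) : ZMod p) = ((1 : ℕ) : ZMod p) := by
        push_cast
        rw [hs0def, ZMod.natCast_val, ZMod.cast_id]
        exact inv_mul_cancel₀ hZa
      have hmeq : s0 * a ≡ 1 [MOD p] := (ZMod.natCast_eq_natCast_iff _ _ _).1 hmod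
      have hpos : 1 ≤ s0 * a := by
        rcases Nat.eq_zero_or_pos (s0 * a) with h | h
        · exfalso
          rw [h] at hmeq
          have h1 : (0 : ℕ) % p = 1 % p := hmeq
          rw [Nat.zero_mod, Nat.mod_eq_of_lt hp.one_lt] at h1
          omega
        · omega
      obtain ⟨t, ht⟩ := (Nat.modEq_iff_dvd' hpos).1 hmeq.symm
      have hsa : s0 * a = 1 + p * t := by omega
      have hcm : ∀ m : ℕ, ∀ k ∈ K, (x : D) ^ (a * m) * k = k * (x : D) ^ (a * m) := by
        intro m
        induction m with
        | zero => intro k hk; simp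
        | succ n ih =>
          intro k hk
          rw [Nat.mul_succ, pow_add]
          calc (x : D) ^ (a * n) * (x : D) ^ a * k
              = (x : D) ^ (a * n) * ((x : D) ^ a * k) := by rw [mul_assoc]
            _ = (x : D) ^ (a * n) * (k * (x : D) ^ a) := by rw [hca k hk]
            _ = ((x : D) ^ (a * n) * k) * (x : D) ^ a := by rw [mul_assoc]
            _ = (k * (x : D) ^ (a * n)) * (x : D) ^ a := by rw [ih k hk]
            _ = k * ((x : D) ^ (a * n) * (x : D) ^ a) := by rw [mul_assoc]
      have hcp : ∀ m : ℕ, ∀ k ∈ K, (x : D) ^ (p * m) * k = k * (x : D) ^ (p * m) := by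
        intro m
        induction m with
        | zero => intro k hk; simp
        | succ n ih =>
          intro k hk
          rw [Nat.mul_succ, pow_add]
          calc (x : D) ^ (p * n) * (x : D) ^ p * k
              = (x : D) ^ (p * n) * ((x : D) ^ p * k) := by rw [mul_assoc]
            _ = (x : D) ^ (p * n) * (k * (x : D) ^ p) := by rw [hxp_comm k hk]
            _ = ((x : D) ^ (p * n) * k) * (x : D) ^ p := by rw [mul_assoc]
            _ = (k * (x : D) ^ (p * n)) * (x : D) ^ p := by rw [ih k hk]
            _ = k * ((x : D) ^ (p * n) * (x : D) ^ p) := by rw [mul_assoc]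
      apply hx_not
      intro k hk
      have h1 : (x : D) ^ (a * s0) * k = k * (x : D) ^ (a * s0) := hcm s0 k hk
      have e : a * s0 = 1 + p * t := by rw [mul_comm]; exact hsa
      rw [e, pow_add, pow_one] at h1
      have h2 : (x : D) ^ (p * t) * k = k * (x : D) ^ (p * t) := hcp t k hk
      have h3 : (x : D) * ((x : D) ^ (p * t) * k) = k * ((x : D) * (x : D) ^ (p * t)) := by
        rw [← mul_assoc]; exact h1
      rw [h2] at h3
      have h4 : ((x : D) * k) * (x : D) ^ (p * t) = (k * (x : D)) * (x : D) ^ (p * t) := by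
        rw [mul_assoc, mul_assoc]; exact h3
      exact mul_right_cancel₀ (pow_ne_zero _ hX0) h4
    have hneq : ∀ i j : ℕ, i < j → j < p →
        ∃ k, k ∈ K ∧ σfn (x ^ i) k ≠ σfn (x ^ j) k := by
      intro i j hij hjp
      by_contra hcon
      push_neg at hcon
      refine hdist (j - i) (by omega) (by omega) ?_
      intro k'' hk''
      have hkK : σfn (x ^ i)⁻¹ k'' ∈ K := hconj _ (inv_mem (pow_mem hxM i)) k'' hk''
      have h1 : σfn (x ^ i) (σfn (x ^ i)⁻¹ k'') = k'' := by
        rw [hσcomp, mul_inv_cancel]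
        exact hσone k''
      have h2 := hcon _ hkK
      rw [h1] at h2
      set m : D := σfn (x ^ i)⁻¹ k'' with hm
      have hsplit : (x : Dˣ) ^ j = x ^ (j - i) * x ^ i := by
        rw [← pow_add]
        congr 1
        omega
      have e1 : ((x ^ j : Dˣ) : D) * m = k'' * ((x ^ j : Dˣ) : D) := by
        rw [hσ1 (x ^ j) m, ← h2]
      have e2 : ((x ^ j : Dˣ) : D) * m
          = (((x ^ (j - i) : Dˣ) : D) * k'') * ((x ^ i : Dˣ) : D) := by
        rw [hsplit, Units.val_mul, mul_assoc, hσ1 (x ^ i) m, h1, ← mul_assoc]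
      have e3 : (((x ^ (j - i) : Dˣ) : D) * k'') * ((x ^ i : Dˣ) : D)
          = (k'' * ((x ^ (j - i) : Dˣ) : D)) * ((x ^ i : Dˣ) : D) := by
        rw [← e2, e1, hsplit, Units.val_mul, ← mul_assoc]
      have e4 := mul_right_cancel₀ (Units.ne_zero (x ^ i)) e3
      have e5 : (x : D) ^ (j - i) * k'' = k'' * (x : D) ^ (j - i) := by
        rw [← hvp (j - i)]
        exact e4
      exact e5
    have hbridge : ∀ (i : ℕ) (k : D), σfn (x ^ i) k * (x : D) ^ i = (x : D) ^ i * k := by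
      intro i k
      rw [← hvp i, ← hσ1 (x ^ i) k]
    have hInd : ∀ (n : ℕ) (c : Fin p → D), (∀ i, c i ∈ K) →
        ((Finset.univ.filter (fun i : Fin p => c i ≠ 0)).card ≤ n) →
        (∑ i : Fin p, c i * (x : D) ^ (i : ℕ)) = 0 → ∀ i, c i = 0 := by
      intro n
      induction n with
      | zero =>
        intro c hc hcard hsum i
        by_contra h0
        have hmem : i ∈ Finset.univ.filter (fun i : Fin p => c i ≠ 0) := by
          simp [h0]
        have := Finset.card_pos.2 ⟨i, hmem⟩
        omega
      | succ n ih =>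
        intro c hc hcard hsum i0
        by_contra h0
        by_cases hsingle : ∀ j : Fin p, c j ≠ 0 → j = i0
        · have hsum1 : ∑ j : Fin p, c j * (x : D) ^ (j : ℕ) = c i0 * (x : D) ^ (i0 : ℕ) := by
            apply Finset.sum_eq_single_of_mem i0 (Finset.mem_univ _)
            intro j _ hji
            rcases eq_or_ne (c j) 0 with h | h
            · rw [h, zero_mul]
            · exact absurd (hsingle j h) hji
          rw [hsum1] at hsum
          rcases mul_eq_zero.1 hsum with h | h
          · exact h0 h
          · exact absurd h (pow_ne_zero _ hX0)
        · push_neg at hsingle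
          obtain ⟨j1, hj1, hj1ne⟩ := hsingle
          have hkey : ∃ k, k ∈ K ∧ σfn (x ^ ((i0 : ℕ))) k ≠ σfn (x ^ ((j1 : ℕ))) k := by
            have hne : (i0 : ℕ) ≠ (j1 : ℕ) := fun h => hj1ne (Fin.ext h.symm)
            rcases lt_or_gt_of_ne hne with hlt | hgt
            · obtain ⟨k, hkK, hkne⟩ := hneq _ _ hlt j1.2
              exact ⟨k, hkK, hkne⟩
            · obtain ⟨k, hkK, hkne⟩ := hneq _ _ hgt i0.2
              exact ⟨k, hkK, fun h => hkne h.symm⟩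
          obtain ⟨k, hkK, hkne⟩ := hkey
          set c' : Fin p → D :=
            fun i => c i * σfn (x ^ (i : ℕ)) k - c i * σfn (x ^ (i0 : ℕ)) k with hc'def
          have hσ0K : σfn (x ^ (i0 : ℕ)) k ∈ K := hσmem _ (pow_mem hxM _) k hkK
          have hc'K : ∀ i, c' i ∈ K := fun i =>
            K.sub_mem (K.mul_mem (hc i) (hσmem _ (pow_mem hxM _) k hkK))
              (K.mul_mem (hc i) hσ0K)
          have hsum2 : ∑ i : Fin p, (c i * σfn (x ^ (i : ℕ)) k) * (x : D) ^ (i : ℕ) = 0 := by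
            have hterm : ∀ i : Fin p, (c i * σfn (x ^ (i : ℕ)) k) * (x : D) ^ (i : ℕ)
                = (c i * (x : D) ^ (i : ℕ)) * k := by
              intro i
              rw [mul_assoc, hbridge, ← mul_assoc]
            rw [Finset.sum_congr rfl (fun i _ => hterm i), ← Finset.sum_mul, hsum, zero_mul]
          have hsum3 : ∑ i : Fin p, (c i * σfn (x ^ (i0 : ℕ)) k) * (x : D) ^ (i : ℕ) = 0 := by
            have hterm : ∀ i : Fin p, (c i * σfn (x ^ (i0 : ℕ)) k) * (x : D) ^ (i : ℕ)
                = σfn (x ^ (i0 : ℕ)) k * (c i * (x : D) ^ (i : ℕ)) := by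
              intro i
              rw [hcommD _ (hc i) _ hσ0K, mul_assoc]
            rw [Finset.sum_congr rfl (fun i _ => hterm i), ← Finset.mul_sum, hsum, mul_zero]
          have hsum' : ∑ i : Fin p, c' i * (x : D) ^ (i : ℕ) = 0 := by
            have hterm : ∀ i : Fin p, c' i * (x : D) ^ (i : ℕ)
                = (c i * σfn (x ^ (i : ℕ)) k) * (x : D) ^ (i : ℕ)
                  - (c i * σfn (x ^ (i0 : ℕ)) k) * (x : D) ^ (i : ℕ) := by
              intro i
              exact sub_mul _ _ _
            rw [Finset.sum_congr rfl (fun i _ => hterm i), Finset.sum_sub_distrib,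
              hsum2, hsum3, sub_zero]
          have hc'i0 : c' i0 = 0 := by simp [hc'def]
          have hsubset : (Finset.univ.filter (fun i : Fin p => c' i ≠ 0))
              ⊆ (Finset.univ.filter (fun i : Fin p => c i ≠ 0)).erase i0 := by
            intro j hj
            rw [Finset.mem_filter] at hj
            rw [Finset.mem_erase, Finset.mem_filter]
            refine ⟨?_, Finset.mem_univ _, ?_⟩
            · intro hji0
              apply hj.2
              rw [hji0]
              exact hc'i0
            · intro hcj
              apply hj.2
              simp [hc'def, hcj]
          have hcard' : (Finset.univ.filter (fun i : Fin p => c' i ≠ 0)).card ≤ n := by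
            have h1 := Finset.card_le_card hsubset
            have hi0mem : i0 ∈ Finset.univ.filter (fun i : Fin p => c i ≠ 0) := by simp [h0]
            have h2 := Finset.card_erase_of_mem hi0mem
            omega
          have hz := ih c' hc'K hcard' hsum' j1
          have hz2 : c j1 * (σfn (x ^ (j1 : ℕ)) k - σfn (x ^ (i0 : ℕ)) k) = 0 := by
            rw [mul_sub]
            exact hz
          rcases mul_eq_zero.1 hz2 with h | h
          · exact hj1 h
          · exact hkne (sub_eq_zero.1 h).symm
    haveI : Nonempty (Fin p) := ⟨⟨0, hp.pos⟩⟩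
    have hLI : LinearIndependent (↥K) (fun i : Fin p => (x : D) ^ (i : ℕ)) := by
      rw [Fintype.linearIndependent_iff]
      intro g hg i
      have hsumg : ∑ i : Fin p, ((g i : D)) * (x : D) ^ (i : ℕ) = 0 := hg
      have := hInd p (fun i => ((g i : D))) (fun i => (g i).2)
        (le_trans (Finset.card_filter_le _ _) (by simp)) hsumg i
      exact Subtype.ext this
    have hcard : Fintype.card (Fin p) = Module.finrank (↥K) D := by
      rw [Fintype.card_fin, hKD]
    set B := basisOfLinearIndependentOfCardEqFinrank hLI hcard with hBdef
    have hB : ∀ i : Fin p, B i = (x : D) ^ (i : ℕ) :=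
      fun i => congrFun (coe_basisOfLinearIndependentOfCardEqFinrank hLI hcard) i
    refine ⟨hxpK, ?_, ?_⟩
    · intro d
      refine ⟨fun i => ((B.repr (d * (x : D)⁻¹) i : ↥K) : D),
        fun i => (B.repr (d * (x : D)⁻¹) i).2, ?_⟩
      have h1 : ∑ i : Fin p, (B.repr (d * (x : D)⁻¹) i) • B i = d * (x : D)⁻¹ :=
        B.sum_repr _
      have h2 : ∑ i : Fin p, ((B.repr (d * (x : D)⁻¹) i : D)) * (x : D) ^ (i : ℕ)
          = d * (x : D)⁻¹ := by
        conv_rhs => rw [← h1]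
        apply Finset.sum_congr rfl
        intro i _
        rw [hB i]
        rfl
      have h3 : (∑ i : Fin p, ((B.repr (d * (x : D)⁻¹) i : D)) * (x : D) ^ (i : ℕ)) * (x : D)
          = d := by
        rw [h2, mul_assoc, inv_mul_cancel₀ hX0, mul_one]
      have h4 : (∑ i : Fin p, ((B.repr (d * (x : D)⁻¹) i : D)) * (x : D) ^ (i : ℕ)) * (x : D)
          = ∑ i : Fin p, ((B.repr (d * (x : D)⁻¹) i : D)) * (x : D) ^ ((i : ℕ) + 1) := by
        rw [Finset.sum_mul]
        apply Finset.sum_congr rfl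
        intro i _
        rw [mul_assoc, ← pow_succ]
      rw [← h4]
      exact h3.symm
    · intro c hcK hsum i
      have h1 : (∑ i : Fin p, c i * (x : D) ^ (i : ℕ)) * (x : D) = 0 := by
        rw [Finset.sum_mul, ← hsum]
        apply Finset.sum_congr rfl
        intro i _
        rw [mul_assoc, ← pow_succ]
      have h2 : ∑ i : Fin p, c i * (x : D) ^ (i : ℕ) = 0 := by
        rcases mul_eq_zero.1 h1 with h | h
        · exact h
        · exact absurd h hX0
      exact hInd p c hcK (le_trans (Finset.card_filter_le _ _) (by simp)) h2 i
  constructor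
  · obtain ⟨m0, hm0⟩ := hφsurj (Multiplicative.ofAdd (1 : ZMod p))
    have hm0K : ((m0 : Dˣ) : D) ∉ K := by
      intro hmem
      have hker : m0 ∈ φ.ker := by
        rw [hφker, Subgroup.mem_subgroupOf]
        exact Subgroup.mem_inf.2 ⟨hmem, hmax.1.le m0.2⟩
      rw [MonoidHom.mem_ker, hm0] at hker
      have h1 : (1 : ZMod p) = 0 := by
        have := congrArg Multiplicative.toAdd hker
        simpa using this
      exact one_ne_zero h1
    obtain ⟨-, hspan, -⟩ := main (m0 : Dˣ) m0.2 hm0K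
    rw [eq_top_iff]
    intro d _
    obtain ⟨c, hcK, hd⟩ := hspan d
    rw [hd]
    apply Subring.sum_mem
    intro i _
    apply Subring.mul_mem
    · have h1 : c i ∈ R := hKR _ (hcK i)
      have h2 : R ≤ Subring.closure ((F : Set D) ∪ (Units.val '' (M : Set Dˣ))) := by
        rw [hRdef]
        apply Subring.closure_mono
        rintro a (ha | ha)
        · exact Or.inl ha
        · obtain rfl : a = ((u : Dˣ) : D) := ha
          exact Or.inr ⟨u, huM, rfl⟩
      exact h2 h1
    · apply Subring.pow_mem
      apply Subring.subset_closure
      exact Or.inr ⟨(m0 : Dˣ), m0.2, rfl⟩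
  · intro x hxM hxK
    obtain ⟨hxpK, hspan, hind⟩ := main x hxM hxK
    refine ⟨?_, hspan, hind⟩
    rw [hFdef, Subring.mem_center_iff]
    intro g
    obtain ⟨c, hcK, hg⟩ := hspan g
    rw [hg, Finset.sum_mul, Finset.mul_sum]
    apply Finset.sum_congr rfl
    intro i _
    calc (c i * (x : D) ^ ((i : ℕ) + 1)) * (x : D) ^ p
        = c i * ((x : D) ^ ((i : ℕ) + 1) * (x : D) ^ p) := by rw [mul_assoc]
      _ = c i * ((x : D) ^ p * (x : D) ^ ((i : ℕ) + 1)) := by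
            rw [← pow_add, ← pow_add, add_comm]
      _ = (c i * (x : D) ^ p) * (x : D) ^ ((i : ℕ) + 1) := by rw [mul_assoc]
      _ = ((x : D) ^ p * c i) * (x : D) ^ ((i : ℕ) + 1) := by
            rw [hcommD _ (hcK i) _ hxpK]
      _ = (x : D) ^ p * (c i * (x : D) ^ ((i : ℕ) + 1)) := by rw [mul_assoc]
end

section
/- The subgroup C* ∪ C*·j of the multiplicative group H* of the real quaternions H is a solvable (indeed metabelian) maximal subgroup of H*. -/
/-- The quaternion `j` in the real quaternions. -/
def quaternionJ : Quaternion ℝ := ⟨0, 0, 1, 0⟩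

open scoped commutatorElement

noncomputable section QM2
open Quaternion Complex
open Quaternion Complex

/-- complex-type quaternion -/
def Cp (q : Quaternion ℝ) : Prop := q.imJ = 0 ∧ q.imK = 0
/-- j-type quaternion -/
def Jp (q : Quaternion ℝ) : Prop := q.re = 0 ∧ q.imI = 0

lemma mulCC {a b : Quaternion ℝ} (ha : Cp a) (hb : Cp b) : Cp (a * b) := by
  obtain ⟨h1, h2⟩ := ha; obtain ⟨h3, h4⟩ := hb
  constructor <;> simp [Quaternion.imJ_mul, Quaternion.imK_mul, h1, h2, h3, h4]

lemma mulCJ {a b : Quaternion ℝ} (ha : Cp a) (hb : Jp b) : Jp (a * b) := by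
  obtain ⟨h1, h2⟩ := ha; obtain ⟨h3, h4⟩ := hb
  constructor <;> simp [Quaternion.re_mul, Quaternion.imI_mul, h1, h2, h3, h4]

lemma mulJC {a b : Quaternion ℝ} (ha : Jp a) (hb : Cp b) : Jp (a * b) := by
  obtain ⟨h1, h2⟩ := ha; obtain ⟨h3, h4⟩ := hb
  constructor <;> simp [Quaternion.re_mul, Quaternion.imI_mul, h1, h2, h3, h4]

lemma mulJJ {a b : Quaternion ℝ} (ha : Jp a) (hb : Jp b) : Cp (a * b) := by
  obtain ⟨h1, h2⟩ := ha; obtain ⟨h3, h4⟩ := hb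
  constructor <;> simp [Quaternion.imJ_mul, Quaternion.imK_mul, h1, h2, h3, h4]

lemma invC {a : Quaternion ℝ} (ha : Cp a) : Cp a⁻¹ := by
  obtain ⟨h1, h2⟩ := ha
  constructor <;> simp [Quaternion.inv_def, h1, h2]

lemma invJ {a : Quaternion ℝ} (ha : Jp a) : Jp a⁻¹ := by
  obtain ⟨h1, h2⟩ := ha
  constructor <;> simp [Quaternion.inv_def, h1, h2]

lemma commCC {a b : Quaternion ℝ} (ha : Cp a) (hb : Cp b) : a * b = b * a := by
  obtain ⟨h1, h2⟩ := ha; obtain ⟨h3, h4⟩ := hb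
  ext <;> simp [Quaternion.re_mul, Quaternion.imI_mul, Quaternion.imJ_mul,
    Quaternion.imK_mul, h1, h2, h3, h4] <;> ring

/-- The subgroup C* ∪ C* j -/
def Mgp : Subgroup (Quaternion ℝ)ˣ where
  carrier := {u | Cp (u : Quaternion ℝ) ∨ Jp (u : Quaternion ℝ)}
  one_mem' := Or.inl ⟨rfl, rfl⟩
  mul_mem' := by
    rintro a b (ha | ha) (hb | hb) <;>
      simp only [Set.mem_setOf_eq, Units.val_mul]
    · exact Or.inl (mulCC ha hb)
    · exact Or.inr (mulCJ ha hb)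
    · exact Or.inr (mulJC ha hb)
    · exact Or.inl (mulJJ ha hb)
  inv_mem' := by
    rintro a (ha | ha) <;> simp only [Set.mem_setOf_eq, Units.val_inv_eq_inv_val]
    · exact Or.inl (invC ha)
    · exact Or.inr (invJ ha)

lemma mem_Mgp {u : (Quaternion ℝ)ˣ} :
    u ∈ Mgp ↔ Cp (u : Quaternion ℝ) ∨ Jp (u : Quaternion ℝ) := Iff.rfl

lemma not_CJ {u : (Quaternion ℝ)ˣ} (h1 : Cp (u : Quaternion ℝ))
    (h2 : Jp (u : Quaternion ℝ)) : False := by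
  have : (u : Quaternion ℝ) = 0 := by
    ext <;> simp [h1.1, h1.2, h2.1, h2.2]
  exact u.ne_zero this

lemma val_commutator (a b : ↥Mgp) :
    ((((⁅a, b⁆ : ↥Mgp) : (Quaternion ℝ)ˣ)) : Quaternion ℝ) =
      (a : (Quaternion ℝ)ˣ) * (b : (Quaternion ℝ)ˣ) * ((a : (Quaternion ℝ)ˣ) : Quaternion ℝ)⁻¹ *
        ((b : (Quaternion ℝ)ˣ) : Quaternion ℝ)⁻¹ := by
  simp [commutatorElement_def, Units.val_inv_eq_inv_val]

lemma comm_cp_commutator (a b : ↥Mgp) :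
    Cp ((((⁅a, b⁆ : ↥Mgp) : (Quaternion ℝ)ˣ)) : Quaternion ℝ) := by
  rw [val_commutator]
  rcases a.2 with ha | ha <;> rcases b.2 with hb | hb
  · exact mulCC (mulCC (mulCC ha hb) (invC ha)) (invC hb)
  · exact mulJJ (mulJC (mulCJ ha hb) (invC ha)) (invJ hb)
  · exact mulCC (mulJJ (mulJC ha hb) (invJ ha)) (invC hb)
  · exact mulJJ (mulCJ (mulJJ ha hb) (invJ ha)) (invJ hb)

lemma cp_comm_one {x y : ↥Mgp} (hx : Cp (((x : (Quaternion ℝ)ˣ)) : Quaternion ℝ))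
    (hy : Cp (((y : (Quaternion ℝ)ˣ)) : Quaternion ℝ)) : ⁅x, y⁆ = 1 := by
  rw [commutatorElement_eq_one_iff_commute]
  exact Subtype.ext (Units.ext (commCC hx hy))

lemma metabelian : ∀ a b c d : ↥Mgp, ⁅⁅a, b⁆, ⁅c, d⁆⁆ = 1 := fun a b c d =>
  cp_comm_one (comm_cp_commutator a b) (comm_cp_commutator c d)

lemma cp_of_mem_commutator {x : ↥Mgp} (hx : x ∈ commutator ↥Mgp) :
    Cp (((x : (Quaternion ℝ)ˣ)) : Quaternion ℝ) := by
  rw [commutator_def, Subgroup.commutator_def] at hx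
  refine Subgroup.closure_induction ?_ ?_ ?_ ?_ hx
  · rintro x ⟨g, -, h, -, rfl⟩
    exact comm_cp_commutator g h
  · exact ⟨rfl, rfl⟩
  · intro x y _ _ hx hy
    have h : (((x * y : ↥Mgp) : (Quaternion ℝ)ˣ) : Quaternion ℝ)
        = ((x : (Quaternion ℝ)ˣ) : Quaternion ℝ) * ((y : (Quaternion ℝ)ˣ) : Quaternion ℝ) := rfl
    rw [h]; exact mulCC hx hy
  · intro x _ hx
    have : (((x⁻¹ : ↥Mgp) : (Quaternion ℝ)ˣ) : Quaternion ℝ)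
        = (((x : (Quaternion ℝ)ˣ) : Quaternion ℝ))⁻¹ := by
      push_cast [Units.val_inv_eq_inv_val]; ring
    rw [this]; exact invC hx

lemma solvableM : IsSolvable ↥Mgp := by
  refine ⟨⟨2, ?_⟩⟩
  have h1 : derivedSeries ↥Mgp 2 = ⁅commutator ↥Mgp, commutator ↥Mgp⁆ := by
    rw [show (2 : ℕ) = 1 + 1 from rfl, derivedSeries_succ, derivedSeries_one]
  rw [h1, eq_bot_iff, Subgroup.commutator_le]
  intro g₁ hg₁ g₂ hg₂
  rw [Subgroup.mem_bot]
  exact cp_comm_one (cp_of_mem_commutator hg₁) (cp_of_mem_commutator hg₂)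

lemma jp_iff (v : Quaternion ℝ) : Jp v ↔ ∃ c : Quaternion ℝ,
    (c.imJ = 0 ∧ c.imK = 0) ∧ v = c * quaternionJ := by
  constructor
  · rintro ⟨h1, h2⟩
    refine ⟨⟨v.imJ, v.imK, 0, 0⟩, ⟨rfl, rfl⟩, ?_⟩
    ext <;> grind [quaternionJ, Quaternion.re_mul, Quaternion.imI_mul, Quaternion.imJ_mul,
      Quaternion.imK_mul]
  · rintro ⟨c, ⟨h1, h2⟩, rfl⟩
    constructor <;> simp only [Quaternion.re_mul, Quaternion.imI_mul, Quaternion.imJ_mul, Quaternion.imK_mul] <;> simp [quaternionJ, Quaternion.re_mul, Quaternion.imI_mul, h1, h2]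

lemma Mgp_coe_eq : (Mgp : Set (Quaternion ℝ)ˣ) = {u : (Quaternion ℝ)ˣ |
    ((u : Quaternion ℝ).imJ = 0 ∧ (u : Quaternion ℝ).imK = 0) ∨
    ∃ c : Quaternion ℝ, (c.imJ = 0 ∧ c.imK = 0) ∧
      (u : Quaternion ℝ) = c * quaternionJ} := by
  ext u
  simp only [SetLike.mem_coe, mem_Mgp, Set.mem_setOf_eq, Cp, jp_iff]

lemma Mgp_ne_top : Mgp ≠ ⊤ := by
  intro h
  have h0 : (⟨1, 0, 1, 0⟩ : Quaternion ℝ) ≠ 0 := by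
    intro hh
    have := congrArg QuaternionAlgebra.re hh
    norm_num at this
  have hm := (Subgroup.eq_top_iff' Mgp).mp h (Units.mk0 _ h0)
  rw [mem_Mgp] at hm
  rcases hm with hc | hc
  · have := hc.1
    change (1:ℝ) = 0 at this
    norm_num at this
  · have := hc.1
    change (1:ℝ) = 0 at this
    norm_num at this

def Qc (z w : ℂ) : Quaternion ℝ := ⟨z.re, z.im, w.re, w.im⟩

lemma Qc_mul (z w z' w' : ℂ) : Qc z w * Qc z' w' =
    Qc (z * z' - w * (starRingEnd ℂ) w') (z * w' + w * (starRingEnd ℂ) z') := by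
  ext <;> simp only [Quaternion.re_mul, Quaternion.imI_mul, Quaternion.imJ_mul, Quaternion.imK_mul] <;> 
    simp [Qc, Quaternion.re_mul, Quaternion.imI_mul, Quaternion.imJ_mul, Quaternion.imK_mul,
      Complex.mul_re, Complex.mul_im] <;> ring

lemma Qc_zero_iff {z w : ℂ} : Qc z w = 0 ↔ z = 0 ∧ w = 0 := by
  simp only [Quaternion.ext_iff]; simp [Qc, Complex.ext_iff]; tauto

lemma Qc_eta (q : Quaternion ℝ) : Qc ⟨q.re, q.imI⟩ ⟨q.imJ, q.imK⟩ = q := by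
  ext <;> simp [Qc]

lemma lagrange (z w z' w' : ℂ) :
    Complex.normSq (z * z' - w * (starRingEnd ℂ) w') +
      Complex.normSq (z * w' + w * (starRingEnd ℂ) z') =
    (Complex.normSq z + Complex.normSq w) * (Complex.normSq z' + Complex.normSq w') := by
  simp [Complex.normSq_apply, Complex.mul_re, Complex.mul_im]; ring

example (z w : ℂ) : Complex.normSq (z - w) =
    Complex.normSq z + Complex.normSq w - 2 * (z * (starRingEnd ℂ) w).re := Complex.normSq_sub z w

-- square root of a unit complex number
lemma exists_sq {γ : ℂ} (h : Complex.normSq γ = 1) :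
    ∃ α : ℂ, Complex.normSq α = 1 ∧ α ^ 2 = γ := by
  refine ⟨Complex.exp ((γ.arg / 2 : ℝ) * Complex.I), ?_, ?_⟩
  · have := Complex.norm_exp_ofReal_mul_I (γ.arg / 2)
    rw [← Complex.sq_norm, this]; norm_num
  · rw [sq, ← Complex.exp_add]
    have h2 : ((γ.arg / 2 : ℝ) : ℂ) * Complex.I + ((γ.arg / 2 : ℝ) : ℂ) * Complex.I
        = (γ.arg : ℂ) * Complex.I := by push_cast; ring
    rw [h2]
    have habs : ‖γ‖ = 1 := by
      rw [Complex.norm_def, h, Real.sqrt_one]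
    have := Complex.norm_mul_exp_arg_mul_I γ
    rw [habs] at this; simpa using this


section Max

variable {H : Subgroup (Quaternion ℝ)ˣ} (hMH : Mgp ≤ H)

def mem' (H : Subgroup (Quaternion ℝ)ˣ) (z w : ℂ) : Prop :=
  ∃ v : (Quaternion ℝ)ˣ, v ∈ H ∧ (v : Quaternion ℝ) = Qc z w

lemma mem'_congr {z w z₂ w₂ : ℂ} (hz : z = z₂) (hw : w = w₂) (h : mem' H z w) :
    mem' H z₂ w₂ := hz ▸ hw ▸ h

lemma mem'_mul {z w z' w' : ℂ} (h : mem' H z w) (h' : mem' H z' w') :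
    mem' H (z * z' - w * (starRingEnd ℂ) w') (z * w' + w * (starRingEnd ℂ) z') := by
  obtain ⟨v, hv, hveq⟩ := h; obtain ⟨v', hv', hveq'⟩ := h'
  exact ⟨v * v', mul_mem hv hv', by rw [Units.val_mul, hveq, hveq', Qc_mul]⟩

include hMH

lemma mem'_c {α : ℂ} (hα : α ≠ 0) : mem' H α 0 := by
  refine ⟨Units.mk0 (Qc α 0) (by rw [Ne, Qc_zero_iff]; tauto), hMH ?_, by simp⟩
  rw [mem_Mgp]
  left
  constructor <;> simp only [Units.val_mk0] <;> simp [Qc]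

lemma mem'_J : mem' H 0 1 := by
  refine ⟨Units.mk0 (Qc 0 1) (by rw [Ne, Qc_zero_iff]; simp), hMH ?_, by simp⟩
  rw [mem_Mgp]
  right
  constructor <;> simp only [Units.val_mk0] <;> simp [Qc]

lemma mem'_left {α z w : ℂ} (hα : α ≠ 0) (h : mem' H z w) : mem' H (α * z) (α * w) := by
  have := mem'_mul (mem'_c hMH hα) h
  exact mem'_congr (by simp) (by simp) this

lemma mem'_right {β z w : ℂ} (hβ : β ≠ 0) (h : mem' H z w) :
    mem' H (z * β) (w * (starRingEnd ℂ) β) := by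
  have := mem'_mul h (mem'_c hMH hβ)
  exact mem'_congr (by simp) (by simp) this

lemma mem'_swap {z w : ℂ} (h : mem' H z w) :
    mem' H (-((starRingEnd ℂ) w)) ((starRingEnd ℂ) z) := by
  have := mem'_mul (mem'_J hMH) h
  exact mem'_congr (by simp) (by simp) this

end Max

def XS (H : Subgroup (Quaternion ℝ)ˣ) : Set ℝ :=
  {x | ∃ z w : ℂ, mem' H z w ∧ Complex.normSq z = x ∧ Complex.normSq w = 1 - x}

section Max2

variable {H : Subgroup (Quaternion ℝ)ˣ} (hMH : Mgp ≤ H)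

include hMH

lemma one_mem_XS : (1 : ℝ) ∈ XS H :=
  ⟨1, 0, mem'_c hMH one_ne_zero, by simp, by simp⟩

lemma XS_sym {x : ℝ} (h : x ∈ XS H) : 1 - x ∈ XS H := by
  obtain ⟨z, w, hm, hz, hw⟩ := h
  exact ⟨_, _, mem'_swap hMH hm, by simpa using hw, by simpa using hz⟩

end Max2

lemma choose_phase (D : ℂ) (t : ℝ) (ht1 : -1 ≤ t) (ht2 : t ≤ 1) :
    ∃ α : ℂ, Complex.normSq α = 1 ∧ (D * α ^ 2).re = -t * Real.sqrt (Complex.normSq D) := by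
  by_cases hD : D = 0
  · exact ⟨1, by simp, by simp [hD]⟩
  · have habs : 0 < ‖D‖ := norm_pos_iff.mpr hD
    set e : ℂ := ⟨-t, Real.sqrt (1 - t ^ 2)⟩ with he
    have hne : Complex.normSq e = 1 := by
      rw [Complex.normSq_apply]
      simp only [he]
      rw [Real.mul_self_sqrt (by nlinarith)]
      ring
    set γ : ℂ := (starRingEnd ℂ) D * e / (‖D‖ : ℂ) with hγ
    have hnγ : Complex.normSq γ = 1 := by
      rw [hγ, map_div₀, map_mul, Complex.normSq_conj, hne, mul_one, Complex.normSq_ofReal,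
        ← Complex.sq_norm]
      field_simp
    -- square root
    obtain ⟨α, hα1, hα2⟩ : ∃ α : ℂ, Complex.normSq α = 1 ∧ α ^ 2 = γ := by
      refine ⟨Complex.exp ((γ.arg / 2 : ℝ) * Complex.I), ?_, ?_⟩
      · have := Complex.norm_exp_ofReal_mul_I (γ.arg / 2)
        rw [← Complex.sq_norm, this]; norm_num
      · rw [sq, ← Complex.exp_add]
        have h2 : ((γ.arg / 2 : ℝ) : ℂ) * Complex.I + ((γ.arg / 2 : ℝ) : ℂ) * Complex.I
            = (γ.arg : ℂ) * Complex.I := by push_cast; ring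
        rw [h2]
        have habsγ : ‖γ‖ = 1 := by
          rw [Complex.norm_def, hnγ, Real.sqrt_one]
        have := Complex.norm_mul_exp_arg_mul_I γ
        rw [habsγ] at this; simpa using this
    refine ⟨α, hα1, ?_⟩
    rw [hα2, hγ]
    have hd : D * ((starRingEnd ℂ) D * e / (‖D‖ : ℂ))
        = (‖D‖ : ℂ) * e := by
      have h0 : ((‖D‖ : ℝ) : ℂ) ≠ 0 := by exact_mod_cast habs.ne'
      rw [← mul_div_assoc, ← mul_assoc, Complex.mul_conj, ← Complex.sq_norm]
      field_simp
      push_cast; ring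
    rw [hd]
    have : ((‖D‖ : ℂ) * e).re = ‖D‖ * e.re := by
      simp [Complex.mul_re, he]
    rw [this, Complex.norm_def]
    simp only [he]
    ring

section Max3

variable {H : Subgroup (Quaternion ℝ)ˣ} (hMH : Mgp ≤ H)

include hMH

lemma XS_step {x x' t : ℝ} (hx : x ∈ XS H) (hx' : x' ∈ XS H) (ht1 : -1 ≤ t) (ht2 : t ≤ 1) :
    x * x' + (1 - x) * (1 - x') + 2 * t * Real.sqrt (x * x' * ((1 - x) * (1 - x'))) ∈ XS H := by
  obtain ⟨z, w, hm, hz, hw⟩ := hx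
  obtain ⟨z', w', hm', hz', hw'⟩ := hx'
  set A : ℂ := z * z' with hA
  set B : ℂ := w * (starRingEnd ℂ) w' with hB
  obtain ⟨α, hα1, hα2⟩ := choose_phase (A * (starRingEnd ℂ) B) t ht1 ht2
  have hα0 : α ≠ 0 := by
    intro h; rw [h] at hα1; simp at hα1
  have h2 := mem'_mul hm (mem'_left hMH hα0 hm')
  set Z : ℂ := z * (α * z') - w * (starRingEnd ℂ) (α * w') with hZ
  set W : ℂ := z * (α * w') + w * (starRingEnd ℂ) (α * z') with hW
  have hZA : Z = A * α - B * (starRingEnd ℂ) α := by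
    rw [hZ, hA, hB]; simp [map_mul]; ring
  have hDns : Complex.normSq (A * (starRingEnd ℂ) B) = x * x' * ((1 - x) * (1 - x')) := by
    rw [map_mul, Complex.normSq_conj, hA, hB, map_mul, map_mul, Complex.normSq_conj,
      hz, hz', hw, hw']
  have hnsZ : Complex.normSq Z =
      x * x' + (1 - x) * (1 - x') + 2 * t * Real.sqrt (x * x' * ((1 - x) * (1 - x'))) := by
    rw [hZA, Complex.normSq_sub]
    have e1 : A * α * (starRingEnd ℂ) (B * (starRingEnd ℂ) α) = A * (starRingEnd ℂ) B * α ^ 2 := by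
      simp [map_mul]; ring
    have e2 : Complex.normSq (A * α) = x * x' := by
      rw [map_mul, hα1, hA, map_mul, hz, hz']; ring
    have e3 : Complex.normSq (B * (starRingEnd ℂ) α) = (1 - x) * (1 - x') := by
      rw [map_mul, Complex.normSq_conj, hα1, hB, map_mul, Complex.normSq_conj, hw, hw']; ring
    rw [e1, hα2, hDns, e2, e3]
    ring
  have hsum : Complex.normSq Z + Complex.normSq W = 1 := by
    rw [hZ, hW, lagrange, hz, hw]
    have : Complex.normSq (α * z') + Complex.normSq (α * w') = 1 := by
      rw [map_mul, map_mul, hα1, hz', hw']; ring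
    rw [this]; ring
  exact ⟨Z, W, h2, hnsZ, by rw [← hnsZ]; linarith⟩

end Max3

section Max4

variable {H : Subgroup (Quaternion ℝ)ˣ} (hMH : Mgp ≤ H)

include hMH

lemma sqrt_prod_sq (x : ℝ) (h0 : 0 ≤ x) (h1 : x ≤ 1) :
    Real.sqrt (x * x * ((1 - x) * (1 - x))) = x * (1 - x) := by
  rw [show x * x * ((1 - x) * (1 - x)) = (x * (1 - x)) ^ 2 by ring,
    Real.sqrt_sq (by nlinarith)]

lemma XS_full (hhalf : (1 / 2 : ℝ) ∈ XS H) {y : ℝ} (hy0 : 0 ≤ y) (hy1 : y ≤ 1) :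
    y ∈ XS H := by
  have h := XS_step hMH hhalf hhalf (t := 2 * y - 1) (by linarith) (by linarith)
  have hs : Real.sqrt (1 / 2 * (1 / 2) * ((1 - 1 / 2) * (1 - 1 / 2))) = 1 / 4 := by
    rw [show (1 / 2 * (1 / 2) * ((1 - 1 / 2) * (1 - 1 / 2)) : ℝ) = (1 / 4 : ℝ) ^ 2 by norm_num,
      Real.sqrt_sq (by norm_num)]
  rw [hs] at h
  have : 1 / 2 * (1 / 2) + (1 - 1 / 2) * (1 - 1 / 2) + 2 * (2 * y - 1) * (1 / 4) = y := by ring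
  rwa [this] at h

lemma XS_reach_half : ∀ n : ℕ, ∀ x : ℝ, x ∈ XS H → 1 / 2 ≤ x → x ≤ 1 - (1 / 2 : ℝ) ^ n →
    (1 / 2 : ℝ) ∈ XS H := by
  intro n
  induction n with
  | zero => intro x _ h1 h2; norm_num at h2; linarith
  | succ n ih =>
    intro x hx h1 h2
    have hpow : (0 : ℝ) < (1 / 2 : ℝ) ^ (n + 1) := by positivity
    have hxlt : x < 1 := by linarith
    have hp : 0 < x * (1 - x) := by nlinarith
    have hs := sqrt_prod_sq hMH x (by linarith) hxlt.le
    by_cases hc : (2 * x - 1) ^ 2 ≤ 1 / 2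
    · set t : ℝ := (1 / 2 - (x * x + (1 - x) * (1 - x))) / (2 * (x * (1 - x))) with htdef
      have ht1 : -1 ≤ t := by
        rw [htdef, le_div_iff₀ (by linarith)]
        nlinarith
      have ht2 : t ≤ 1 := by
        rw [htdef, div_le_iff₀ (by linarith)]
        nlinarith
      have h := XS_step hMH hx hx ht1 ht2
      rw [hs] at h
      have heq : x * x + (1 - x) * (1 - x) + 2 * t * (x * (1 - x)) = 1 / 2 := by
        rw [htdef]; field_simp [show 1 - x ≠ 0 by linarith]; ring
      rwa [heq] at h
    · have h := XS_step hMH hx hx (t := -1) (by norm_num) (by norm_num)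
      rw [hs] at h
      have heq : x * x + (1 - x) * (1 - x) + 2 * (-1) * (x * (1 - x)) = (2 * x - 1) ^ 2 := by
        ring
      rw [heq] at h
      refine ih ((2 * x - 1) ^ 2) h (by linarith) ?_
      have hps : ((1 / 2 : ℝ)) ^ (n + 1) = (1 / 2 : ℝ) ^ n * (1 / 2) := pow_succ _ _
      nlinarith [h2, h1, hxlt]

lemma half_mem (u : (Quaternion ℝ)ˣ) (hu : u ∈ H) (hnm : u ∉ Mgp) : (1 / 2 : ℝ) ∈ XS H := by
  set q : Quaternion ℝ := (u : Quaternion ℝ) with hq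
  set z : ℂ := ⟨q.re, q.imI⟩ with hzdef
  set w : ℂ := ⟨q.imJ, q.imK⟩ with hwdef
  have hmem : mem' H z w := ⟨u, hu, (Qc_eta q).symm⟩
  have hz0 : z ≠ 0 := by
    intro h
    exact hnm (Or.inr ⟨congrArg Complex.re h, congrArg Complex.im h⟩)
  have hw0 : w ≠ 0 := by
    intro h
    exact hnm (Or.inl ⟨congrArg Complex.re h, congrArg Complex.im h⟩)
  have hnz : 0 < Complex.normSq z := Complex.normSq_pos.mpr hz0
  have hnw : 0 < Complex.normSq w := Complex.normSq_pos.mpr hw0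
  set n : ℝ := Complex.normSq z + Complex.normSq w with hn
  have hn0 : 0 < n := by positivity
  set s : ℝ := (Real.sqrt n)⁻¹ with hsdef
  have hs0 : (0 : ℝ) < s := by
    rw [hsdef]; positivity
  have hss : s * s = n⁻¹ := by
    rw [hsdef, ← mul_inv]
    rw [Real.mul_self_sqrt hn0.le]
  have hmem2 : mem' H ((s : ℂ) * z) ((s : ℂ) * w) :=
    mem'_left hMH (by exact_mod_cast hs0.ne') hmem
  set x : ℝ := Complex.normSq z / n with hxdef
  have hx : x ∈ XS H := by
    refine ⟨_, _, hmem2, ?_, ?_⟩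
    · rw [map_mul, Complex.normSq_ofReal, hss, hxdef]; ring
    · rw [map_mul, Complex.normSq_ofReal, hss, hxdef]
      field_simp
      rw [hn]; ring
  have hx0 : 0 < x := by positivity
  have hx1 : x < 1 := by
    rw [hxdef, div_lt_one hn0]; linarith
  rcases le_or_gt (1 / 2) x with hge | hlt
  · obtain ⟨m, hm⟩ := exists_pow_lt_of_lt_one (sub_pos.mpr hx1) (by norm_num : (1 / 2 : ℝ) < 1)
    exact XS_reach_half hMH m x hx hge (by linarith)
  · have hy : 1 - x ∈ XS H := XS_sym hMH hx
    obtain ⟨m, hm⟩ := exists_pow_lt_of_lt_one (show (0:ℝ) < 1 - (1 - x) by linarith)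
      (by norm_num : (1 / 2 : ℝ) < 1)
    exact XS_reach_half hMH m (1 - x) hy (by linarith) (by linarith)

end Max4

section Max5

variable {H : Subgroup (Quaternion ℝ)ˣ} (hMH : Mgp ≤ H)

include hMH

lemma all_units_mem (hhalf : (1 / 2 : ℝ) ∈ XS H) (v : (Quaternion ℝ)ˣ) : v ∈ H := by
  set q : Quaternion ℝ := (v : Quaternion ℝ) with hq
  set z : ℂ := ⟨q.re, q.imI⟩ with hzdef
  set w : ℂ := ⟨q.imJ, q.imK⟩ with hwdef
  by_cases hw0 : w = 0
  · exact hMH (Or.inl ⟨congrArg Complex.re hw0, congrArg Complex.im hw0⟩)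
  by_cases hz0 : z = 0
  · exact hMH (Or.inr ⟨congrArg Complex.re hz0, congrArg Complex.im hz0⟩)
  have hnz : 0 < Complex.normSq z := Complex.normSq_pos.mpr hz0
  have hnw : 0 < Complex.normSq w := Complex.normSq_pos.mpr hw0
  set n : ℝ := Complex.normSq z + Complex.normSq w with hn
  have hn0 : 0 < n := by positivity
  set x : ℝ := Complex.normSq z / n with hxdef
  have hx0 : 0 < x := by positivity
  have hx1 : x < 1 := by rw [hxdef, div_lt_one hn0]; linarith
  obtain ⟨z₁, w₁, hm1, hns1, hns2⟩ := XS_full hMH hhalf hx0.le hx1.le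
  have hz₁ : z₁ ≠ 0 := by
    intro h; rw [h] at hns1; simp at hns1; rw [← hns1] at hx0; linarith
  have hw₁ : w₁ ≠ 0 := by
    intro h; rw [h] at hns2; simp at hns2; linarith
  set γ : ℂ := z / z₁ with hγdef
  set δ : ℂ := w / w₁ with hδdef
  have hγ0 : γ ≠ 0 := div_ne_zero hz0 hz₁
  have hδ0 : δ ≠ 0 := div_ne_zero hw0 hw₁
  have hnγ : Complex.normSq γ = n := by
    rw [hγdef, map_div₀, hns1, hxdef]
    field_simp
  have hnδ : Complex.normSq δ = n := by
    rw [hδdef, map_div₀, hns2, hxdef]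
    rw [show 1 - Complex.normSq z / n = Complex.normSq w / n by field_simp; rw [hn]; ring]
    field_simp
  have hratio : Complex.normSq (γ / δ) = 1 := by
    rw [map_div₀, hnγ, hnδ, div_self hn0.ne']
  obtain ⟨β, hβn, hβsq⟩ := exists_sq hratio
  have hβ0 : β ≠ 0 := by intro h; rw [h] at hβn; simp at hβn
  set α : ℂ := γ / β with hαdef
  have hα0 : α ≠ 0 := div_ne_zero hγ0 hβ0
  have hconjβ : (starRingEnd ℂ) β = β⁻¹ := by
    have : β * (starRingEnd ℂ) β = 1 := by
      rw [Complex.mul_conj, hβn]; norm_num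
    field_simp
    linear_combination this
  have key : mem' H z w := by
    have h1 := mem'_right hMH hβ0 (mem'_left hMH hα0 hm1)
    refine mem'_congr ?_ ?_ h1
    · rw [hαdef, hγdef]; field_simp
    · rw [hconjβ, hαdef, hγdef]
      have hβsq' : β * β = γ / δ := by rw [← sq, hβsq]
      rw [hδdef] at hβsq'
      field_simp at hβsq' ⊢
      rw [hγdef] at hβsq'
      field_simp at hβsq'
      linear_combination -hβsq'
  obtain ⟨v', hv', hveq⟩ := key
  have : v' = v := Units.ext (by rw [hveq, hzdef, hwdef, hq, Qc_eta])
  rwa [this] at hv'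

end Max5

theorem Mgp_maximal : ∀ H : Subgroup (Quaternion ℝ)ˣ, Mgp ≤ H → H = Mgp ∨ H = ⊤ := by
  intro H hMH
  by_cases hHM : H ≤ Mgp
  · exact Or.inl (le_antisymm hHM hMH)
  · right
    obtain ⟨u, hu, hnm⟩ := SetLike.not_le_iff_exists.mp hHM
    rw [Subgroup.eq_top_iff']
    exact all_units_mem hMH (half_mem hMH u hu hnm)

/-- The subgroup `ℂ* ∪ ℂ*·j` of the multiplicative group `ℍ*` of the real quaternions
is a solvable (indeed metabelian) maximal subgroup of `ℍ*`. -/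
theorem quaternion_solvable_maximal_subgroup :
    ∃ M : Subgroup (Quaternion ℝ)ˣ,
      -- the underlying set is ℂ* ∪ ℂ*·j, where ℂ = ℝ + ℝ·i ⊆ ℍ
      ((M : Set (Quaternion ℝ)ˣ) = {u : (Quaternion ℝ)ˣ |
        ((u : Quaternion ℝ).imJ = 0 ∧ (u : Quaternion ℝ).imK = 0) ∨
        ∃ c : Quaternion ℝ, (c.imJ = 0 ∧ c.imK = 0) ∧
          (u : Quaternion ℝ) = c * quaternionJ}) ∧
      -- M is solvable, indeed metabelian
      IsSolvable ↥M ∧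
      (∀ a b c d : ↥M, ⁅⁅a, b⁆, ⁅c, d⁆⁆ = 1) ∧
      -- M is a maximal subgroup of ℍ*
      M ≠ ⊤ ∧ (∀ H : Subgroup (Quaternion ℝ)ˣ, M ≤ H → H = M ∨ H = ⊤) :=
  ⟨Mgp, Mgp_coe_eq, solvableM, metabelian, Mgp_ne_top, Mgp_maximal⟩

end QM2
end
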